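/- Let q ≥ 4 be a prime power. Let ℓ be a line of PG(2,q), let P, Q be two distinct points of ℓ, let m be a line through P different from ℓ, and let R, S, T be three pairwise distinct points of m \ {P}. Then A = (ℓ \ {P,Q}) ∪ {R, S, T} is a minimal (1,2)-saturating set of size q+2 in PG(2,q). -/

import Mathlib

open Module

/-- Points of `PG(N,q)`: 1-dimensional subspaces of `F^(N+1)`. -/
abbrev PGPoint (F : Type) [Field F] (N : ℕ) :=
  {W : Submodule F (Fin (N + 1) → F) // Module.finrank F W = 1}

/-- Lines of `PG(N,q)`: 2-dimensional subspaces of `F^(N+1)`. -/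
abbrev PGLine (F : Type) [Field F] (N : ℕ) :=
  {W : Submodule F (Fin (N + 1) → F) // Module.finrank F W = 2}

/-- The number of points of `S` lying on the line `L`. -/
noncomputable def lineCount {F : Type} [Field F] {N : ℕ}
    (S : Set (PGPoint F N)) (L : PGLine F N) : ℕ :=
  {P : PGPoint F N | P ∈ S ∧ P.1 ≤ L.1}.ncard

/-- The number of unordered pairs of distinct points of `S` collinear with `Q`
(the number of secants of `S` through `Q`, counted with multiplicity). -/
noncomputable def pairCount {F : Type} [Field F] {N : ℕ}
    (S : Set (PGPoint F N)) (Q : PGPoint F N) : ℕ :=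
  {e : Set (PGPoint F N) |
    ∃ A ∈ S, ∃ B ∈ S, A ≠ B ∧ e = {A, B} ∧ Q.1 ≤ A.1 ⊔ B.1}.ncard

/-- `S` spans (generates) `PG(N,q)`. -/
def Spans {F : Type} [Field F] {N : ℕ} (S : Set (PGPoint F N)) : Prop :=
  (⨆ P ∈ S, P.1) = ⊤

/-- `S` is a `(1,μ)`-saturating set. -/
def IsSaturating {F : Type} [Field F] {N : ℕ} (S : Set (PGPoint F N)) (μ : ℕ) : Prop :=
  Spans S ∧ S ≠ Set.univ ∧ ∀ Q : PGPoint F N, Q ∉ S → μ ≤ pairCount S Q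

/-- `S` is an optimal `(1,μ)`-saturating set (`(1,μ)`-OS set). -/
def IsOS {F : Type} [Field F] {N : ℕ} (S : Set (PGPoint F N)) (μ : ℕ) : Prop :=
  Spans S ∧ S ≠ Set.univ ∧ ∀ Q : PGPoint F N, Q ∉ S → pairCount S Q = μ

/-- `S` is a minimal `(1,μ)`-saturating set: no proper subset is `(1,μ)`-saturating. -/
def IsMinimalSaturating {F : Type} [Field F] {N : ℕ} (S : Set (PGPoint F N)) (μ : ℕ) : Prop :=
  IsSaturating S μ ∧ ∀ T : Set (PGPoint F N), T ⊂ S → ¬ IsSaturating T μ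

namespace PGAux

lemma ncard_le2 {α : Type*} (a b : α) : ({a, b} : Set α).ncard ≤ 2 :=
  (Set.ncard_insert_le _ _).trans (by simp)

lemma ncard_le3 {α : Type*} (a b c : α) : ({a, b, c} : Set α).ncard ≤ 3 :=
  (Set.ncard_insert_le _ _).trans (by have := ncard_le2 b c; omega)

lemma ncard_le4 {α : Type*} (a b c d : α) : ({a, b, c, d} : Set α).ncard ≤ 4 :=
  (Set.ncard_insert_le _ _).trans (by have := ncard_le3 b c d; omega)


variable {F : Type} [Field F]

section Pt

lemma pt_ne_iff {A B : PGPoint F 2} : A ≠ B ↔ A.1 ≠ B.1 := by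
  constructor
  · intro h h'; exact h (Subtype.ext h')
  · intro h h'; exact h (congrArg Subtype.val h')

lemma inf_eq_bot {A B : PGPoint F 2} (h : A ≠ B) : A.1 ⊓ B.1 = ⊥ := by
  by_contra hne
  have h1 : 1 ≤ finrank F ↥(A.1 ⊓ B.1) :=
    finrank_pos_iff.2 (Submodule.nontrivial_iff_ne_bot.2 hne)
  have hA : A.1 ⊓ B.1 = A.1 :=
    Submodule.eq_of_le_of_finrank_le inf_le_left (by rw [A.2]; exact h1)
  have hB : A.1 ⊓ B.1 = B.1 :=
    Submodule.eq_of_le_of_finrank_le inf_le_right (by rw [B.2]; exact h1)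
  exact pt_ne_iff.1 h (hA ▸ hB)

lemma finrank_sup_pt {A B : PGPoint F 2} (h : A ≠ B) : finrank F ↥(A.1 ⊔ B.1) = 2 := by
  have := Submodule.finrank_sup_add_finrank_inf_eq A.1 B.1
  rw [inf_eq_bot h, finrank_bot, A.2, B.2] at this
  omega

/-- The line through two distinct points. -/
noncomputable def lineT (A B : PGPoint F 2) (h : A ≠ B) : PGLine F 2 :=
  ⟨A.1 ⊔ B.1, finrank_sup_pt h⟩

lemma lineT_val (A B : PGPoint F 2) (h : A ≠ B) : (lineT A B h).1 = A.1 ⊔ B.1 := rfl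

lemma line_unique {L : PGLine F 2} {A B : PGPoint F 2} (h : A ≠ B)
    (hA : A.1 ≤ L.1) (hB : B.1 ≤ L.1) : L.1 = A.1 ⊔ B.1 :=
  (Submodule.eq_of_le_of_finrank_le (sup_le hA hB) (by rw [finrank_sup_pt h, L.2])).symm

lemma line_ne_iff {L M : PGLine F 2} : L ≠ M ↔ L.1 ≠ M.1 := by
  constructor
  · intro h h'; exact h (Subtype.ext h')
  · intro h h'; exact h (congrArg Subtype.val h')

lemma finrank_inf_lines {L M : PGLine F 2} (h : L ≠ M) : finrank F ↥(L.1 ⊓ M.1) = 1 := by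
  have hlt : L.1 < L.1 ⊔ M.1 := by
    rcases lt_or_eq_of_le (le_sup_left : L.1 ≤ L.1 ⊔ M.1) with h' | h'
    · exact h'
    · exfalso
      have hM : M.1 ≤ L.1 := by rw [h']; exact le_sup_right
      exact line_ne_iff.1 h
        (Submodule.eq_of_le_of_finrank_le hM (by rw [L.2, M.2])).symm
  have h3 : finrank F ↥(L.1 ⊔ M.1) ≤ 3 := by
    have := Submodule.finrank_le (L.1 ⊔ M.1)
    rwa [Module.finrank_fin_fun] at this
  have h2 : 2 < finrank F ↥(L.1 ⊔ M.1) := by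
    have := Submodule.finrank_lt_finrank_of_lt hlt
    omega
  have := Submodule.finrank_sup_add_finrank_inf_eq L.1 M.1
  rw [L.2, M.2] at this
  omega

/-- The intersection point of two distinct lines. -/
noncomputable def meetPt (L M : PGLine F 2) (h : L ≠ M) : PGPoint F 2 :=
  ⟨L.1 ⊓ M.1, finrank_inf_lines h⟩

lemma eq_meetPt {L M : PGLine F 2} (h : L ≠ M) {X : PGPoint F 2}
    (hL : X.1 ≤ L.1) (hM : X.1 ≤ M.1) : X = meetPt L M h :=
  Subtype.ext (Submodule.eq_of_le_of_finrank_le (le_inf hL hM)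
    (by rw [X.2]; exact (finrank_inf_lines h).le))

lemma pts_on_lines_eq {L M : PGLine F 2} (h : L ≠ M) {X Y : PGPoint F 2}
    (h1 : X.1 ≤ L.1) (h2 : X.1 ≤ M.1) (h3 : Y.1 ≤ L.1) (h4 : Y.1 ≤ M.1) : X = Y := by
  rw [eq_meetPt h h1 h2, eq_meetPt h h3 h4]

/-- If `Y` lies on `l`, `U` does not, and `X ∈ U ⊔ Y` with `X ≠ U`,
then `Y ∈ X ⊔ U`. -/
lemma mixed_pair {l : PGLine F 2} {U Y X : PGPoint F 2}
    (hUl : ¬ U.1 ≤ l.1) (hYl : Y.1 ≤ l.1) (hXU : X ≠ U) (hXle : X.1 ≤ U.1 ⊔ Y.1) :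
    Y.1 ≤ X.1 ⊔ U.1 := by
  have hUY : U ≠ Y := fun h => hUl (h ▸ hYl)
  have h1 : (lineT U Y hUY).1 = U.1 ⊔ X.1 :=
    line_unique (fun h => hXU h.symm) le_sup_left hXle
  have h2 : Y.1 ≤ U.1 ⊔ X.1 := h1 ▸ (le_sup_right : Y.1 ≤ (lineT U Y hUY).1)
  rwa [sup_comm] at h2


/-- Through a point `X` off `l` and off `m`, and a point `U ∈ m \ l`,
there is a secant hitting `l` in a point `Y ≠ P`. -/
lemma exists_Y {l m : PGLine F 2} (hml : m ≠ l) {P U X : PGPoint F 2}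
    (hPl : P.1 ≤ l.1) (hPm : P.1 ≤ m.1) (hUm : U.1 ≤ m.1) (hUP : U ≠ P)
    (hXl : ¬ X.1 ≤ l.1) (hXm : ¬ X.1 ≤ m.1) :
    ∃ Y : PGPoint F 2, Y.1 ≤ l.1 ∧ Y ≠ P ∧ X.1 ≤ U.1 ⊔ Y.1 ∧ Y.1 ≤ X.1 ⊔ U.1 := by
  have hUl : ¬ U.1 ≤ l.1 := fun h => hUP (pts_on_lines_eq hml hUm h hPm hPl)
  have hXU : X ≠ U := fun h => hXm (h ▸ hUm)
  set n := lineT X U hXU with hn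
  have hXn : X.1 ≤ n.1 := le_sup_left
  have hUn : U.1 ≤ n.1 := le_sup_right
  have hnl : n ≠ l := fun h => hUl (h ▸ hUn)
  refine ⟨meetPt n l hnl, inf_le_right, ?_, ?_, inf_le_left⟩
  · intro h
    have hPn : P.1 ≤ n.1 := by rw [← h]; exact inf_le_left
    have hnm : n ≠ m := fun h' => hXm (h' ▸ hXn)
    exact hUP (pts_on_lines_eq hnm hUn hUm hPn hPm)
  · have hY : (meetPt n l hnl).1 ≤ n.1 := inf_le_left
    have hUY : U ≠ meetPt n l hnl := fun h => hUl (by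
      rw [h]; exact inf_le_right)
    have := line_unique (L := n) hUY hUn hY
    rw [this] at hXn
    exact hXn

/-- At most one of `R,S,T` can give a secant through `X` hitting `Q`. -/
lemma not_both {l m : PGLine F 2} (hml : m ≠ l) {P Q X U1 U2 : PGPoint F 2}
    (hPl : P.1 ≤ l.1) (hPm : P.1 ≤ m.1) (hPQ : P ≠ Q)
    (hQl : Q.1 ≤ l.1) (hU1m : U1.1 ≤ m.1) (hU2m : U2.1 ≤ m.1) (hU12 : U1 ≠ U2)
    (hXl : ¬ X.1 ≤ l.1) (hXm : ¬ X.1 ≤ m.1)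
    (h1 : Q.1 ≤ X.1 ⊔ U1.1) (h2 : Q.1 ≤ X.1 ⊔ U2.1) : False := by
  have hXQ : X ≠ Q := fun h => hXl (h ▸ hQl)
  have hXU1 : X ≠ U1 := fun h => hXm (h ▸ hU1m)
  have hXU2 : X ≠ U2 := fun h => hXm (h ▸ hU2m)
  have e1 : (lineT X U1 hXU1).1 = X.1 ⊔ Q.1 := line_unique hXQ le_sup_left h1
  have e2 : (lineT X U2 hXU2).1 = X.1 ⊔ Q.1 := line_unique hXQ le_sup_left h2
  have hU2n1 : U2.1 ≤ (lineT X U1 hXU1).1 := by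
    rw [e1, ← e2]; exact le_sup_right
  have hn1m : lineT X U1 hXU1 ≠ m := fun h => hXm (h ▸ (le_sup_left : X.1 ≤ _))
  exact hU12 (pts_on_lines_eq hn1m (le_sup_right) hU1m hU2n1 hU2m)

end Pt

section Fin

variable [Fintype F]

instance : Finite (Submodule F (Fin 3 → F)) :=
  Finite.of_injective (fun W => (W : Set (Fin 3 → F))) SetLike.coe_injective

lemma card_nonzero (W : Submodule F (Fin 3 → F)) :
    Nat.card {v : Fin 3 → F // v ∈ W ∧ v ≠ 0} = Fintype.card F ^ (finrank F W) - 1 := by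
  classical
  have e : {v : Fin 3 → F // v ∈ W ∧ v ≠ 0} ≃ {w : W // w ≠ 0} :=
    { toFun := fun v => ⟨⟨v.1, v.2.1⟩, fun h => v.2.2 (by simpa using congrArg Subtype.val h)⟩
      invFun := fun w => ⟨w.1.1, w.1.2, fun h => w.2 (Subtype.ext h)⟩
      left_inv := fun v => rfl
      right_inv := fun w => rfl }
  rw [Nat.card_congr e]
  rw [Nat.card_eq_fintype_card]
  have : Fintype.card {w : W // w ≠ 0} = Fintype.card {w : W // ¬ w = 0} := rfl
  rw [this, Fintype.card_subtype_compl, card_eq_pow_finrank (K := F) (V := W),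
    Fintype.card_subtype_eq]

lemma card_points_on_line (L : Submodule F (Fin 3 → F)) (hL : finrank F L = 2)
    (hq2 : 2 ≤ Fintype.card F) :
    Nat.card {X : PGPoint F 2 | X.1 ≤ L} = Fintype.card F + 1 := by
  classical
  set q := Fintype.card F with hq
  set s := {X : PGPoint F 2 | X.1 ≤ L} with hs
  let g : {v : Fin 3 → F // v ∈ L ∧ v ≠ 0} → ↥s := fun v =>
    ⟨⟨Submodule.span F {v.1}, finrank_span_singleton v.2.2⟩,
      Submodule.span_le.2 (by simpa using v.2.1)⟩
  have hgval : ∀ v, (g v).1.1 = Submodule.span F {v.1} := fun v => rfl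
  have key : ∀ X : ↥s, Nat.card {v // g v = X} = q - 1 := by
    intro X
    have e : {v // g v = X} ≃ {w : Fin 3 → F // w ∈ X.1.1 ∧ w ≠ 0} :=
      { toFun := fun p => ⟨p.1.1, by
          have h1 : (g p.1).1.1 = X.1.1 := by rw [p.2]
          rw [← h1, hgval]
          exact Submodule.mem_span_singleton_self _, p.1.2.2⟩
        invFun := fun w => ⟨⟨w.1, X.2 w.2.1, w.2.2⟩, by
          apply Subtype.ext; apply Subtype.ext
          rw [hgval]
          exact Submodule.eq_of_le_of_finrank_le
            (Submodule.span_le.2 (by simpa using w.2.1))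
            (by rw [X.1.2, finrank_span_singleton w.2.2])⟩
        left_inv := fun p => Subtype.ext (Subtype.ext rfl)
        right_inv := fun w => rfl }
    rw [Nat.card_congr e, card_nonzero, X.1.2, pow_one]
  have htot : Nat.card {v : Fin 3 → F // v ∈ L ∧ v ≠ 0} = Nat.card ↥s * (q - 1) := by
    rw [← Nat.card_congr (Equiv.sigmaFiberEquiv g)]
    letI : Fintype ↥s := Fintype.ofFinite _
    letI : ∀ X : ↥s, Fintype {v // g v = X} := fun X => Fintype.ofFinite _
    rw [Nat.card_eq_fintype_card, Fintype.card_sigma]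
    rw [Nat.card_eq_fintype_card]
    rw [Finset.sum_congr rfl (fun X _ => by rw [← Nat.card_eq_fintype_card, key X])]
    simp [Finset.sum_const, mul_comm]
  rw [card_nonzero, hL] at htot
  obtain ⟨k, hk⟩ : ∃ k, Fintype.card F = k + 2 := ⟨Fintype.card F - 2, by omega⟩
  rw [hq, hk] at htot ⊢
  have e2 : (k+2)^2 = k*k+4*k+4 := by ring
  rw [e2] at htot
  have h3 : k+2-1 = k+1 := rfl
  rw [h3] at htot
  have e4 : (k+3)*(k+1) = k*k+4*k+3 := by ring
  have h5 : Nat.card ↥s * (k+1) = (k+3)*(k+1) := by omega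
  have h6 := Nat.eq_of_mul_eq_mul_right (Nat.succ_pos k) h5
  omega

lemma exists_pt_notin {L : Submodule F (Fin 3 → F)} (hL : finrank F L = 2)
    (hq2 : 2 ≤ Fintype.card F) (s : Set (PGPoint F 2))
    (hcard : s.ncard < Fintype.card F + 1) :
    ∃ X : PGPoint F 2, X.1 ≤ L ∧ X ∉ s := by
  by_contra h
  push_neg at h
  have hsub : {X : PGPoint F 2 | X.1 ≤ L} ⊆ s := fun X hX => h X hX
  have h1 : {X : PGPoint F 2 | X.1 ≤ L}.ncard ≤ s.ncard :=
    Set.ncard_le_ncard hsub (Set.toFinite s)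
  have h2 : {X : PGPoint F 2 | X.1 ≤ L}.ncard = Fintype.card F + 1 := by
    rw [← Nat.card_coe_set_eq]
    exact card_points_on_line L hL hq2
  omega

lemma two_le_pairCount {St : Set (PGPoint F 2)} {X A B C D : PGPoint F 2}
    (hA : A ∈ St) (hB : B ∈ St) (hC : C ∈ St) (hD : D ∈ St)
    (hAB : A ≠ B) (hCD : C ≠ D)
    (h1 : X.1 ≤ A.1 ⊔ B.1) (h2 : X.1 ≤ C.1 ⊔ D.1)
    (hne : ({A, B} : Set (PGPoint F 2)) ≠ {C, D}) :
    2 ≤ pairCount St X := by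
  have m1 : ({A, B} : Set (PGPoint F 2)) ∈
      {e : Set (PGPoint F 2) |
        ∃ A ∈ St, ∃ B ∈ St, A ≠ B ∧ e = {A, B} ∧ X.1 ≤ A.1 ⊔ B.1} :=
    ⟨A, hA, B, hB, hAB, rfl, h1⟩
  have m2 : ({C, D} : Set (PGPoint F 2)) ∈
      {e : Set (PGPoint F 2) |
        ∃ A ∈ St, ∃ B ∈ St, A ≠ B ∧ e = {A, B} ∧ X.1 ≤ A.1 ⊔ B.1} :=
    ⟨C, hC, D, hD, hCD, rfl, h2⟩
  have h12 := (Set.one_lt_ncard_iff (Set.toFinite _)).2 ⟨_, _, m1, m2, hne⟩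
  unfold pairCount
  omega

lemma pairCount_mono {St T : Set (PGPoint F 2)} (h : T ⊆ St) (X : PGPoint F 2) :
    pairCount T X ≤ pairCount St X := by
  apply Set.ncard_le_ncard _ (Set.toFinite _)
  rintro e ⟨A, hA, B, hB, hAB, he, hle⟩
  exact ⟨A, h hA, B, h hB, hAB, he, hle⟩

lemma pairCount_le_one {St : Set (PGPoint F 2)} {X : PGPoint F 2}
    (z : Set (PGPoint F 2))
    (h : ∀ A ∈ St, ∀ B ∈ St, A ≠ B → X.1 ≤ A.1 ⊔ B.1 → ({A, B} : Set (PGPoint F 2)) = z) :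
    pairCount St X ≤ 1 := by
  have hsub : {e : Set (PGPoint F 2) |
      ∃ A ∈ St, ∃ B ∈ St, A ≠ B ∧ e = {A, B} ∧ X.1 ≤ A.1 ⊔ B.1} ⊆ {z} := by
    rintro e ⟨A, hA, B, hB, hAB, rfl, hle⟩
    exact h A hA B hB hAB hle
  calc pairCount St X ≤ ({z} : Set (Set (PGPoint F 2))).ncard :=
        Set.ncard_le_ncard hsub (Set.toFinite _)
    _ = 1 := Set.ncard_singleton z


/-- Removing one of the three points on `m` destroys saturation. -/
lemma remove_mpt (hq4 : 4 ≤ Fintype.card F)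
    (l m : PGLine F 2) (P Q R' S' T' : PGPoint F 2)
    (hPQ : P ≠ Q) (hPl : P.1 ≤ l.1) (hQl : Q.1 ≤ l.1)
    (hml : m ≠ l) (hPm : P.1 ≤ m.1)
    (hR'm : R'.1 ≤ m.1) (hS'm : S'.1 ≤ m.1) (hT'm : T'.1 ≤ m.1)
    (hR'P : R' ≠ P) (hS'P : S' ≠ P) (hT'P : T' ≠ P)
    (hS'T' : S' ≠ T') :
    ∃ X : PGPoint F 2,
      X ∉ (({Z : PGPoint F 2 | Z.1 ≤ l.1} \ {P, Q}) ∪ {R', S', T'}) ∧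
      pairCount ((({Z : PGPoint F 2 | Z.1 ≤ l.1} \ {P, Q}) ∪ {R', S', T'}) \ {R'}) X ≤ 1 := by
  have hR'l : ¬ R'.1 ≤ l.1 := fun h => hR'P (pts_on_lines_eq hml hR'm h hPm hPl)
  have hS'l : ¬ S'.1 ≤ l.1 := fun h => hS'P (pts_on_lines_eq hml hS'm h hPm hPl)
  have hT'l : ¬ T'.1 ≤ l.1 := fun h => hT'P (pts_on_lines_eq hml hT'm h hPm hPl)
  have hQm : ¬ Q.1 ≤ m.1 := fun h => hPQ (pts_on_lines_eq hml hPm hPl h hQl)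
  have hQS' : Q ≠ S' := fun h => hS'l (h ▸ hQl)
  set n := lineT Q S' hQS' with hn
  have hQn : Q.1 ≤ n.1 := le_sup_left
  have hS'n : S'.1 ≤ n.1 := le_sup_right
  have hnl : n ≠ l := fun h => hS'l (h ▸ hS'n)
  have hnm : n ≠ m := fun h => hQm (h ▸ hQn)
  obtain ⟨X, hXn, hXQS⟩ := exists_pt_notin n.2 (by omega) {Q, S'}
    (lt_of_le_of_lt (Set.ncard_insert_le _ _) (by simp; omega))
  have hXQ : X ≠ Q := fun h => hXQS (by simp [h])
  have hXS' : X ≠ S' := fun h => hXQS (by simp [h])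
  have hXl : ¬ X.1 ≤ l.1 := fun h => hXQ (pts_on_lines_eq hnl hXn h hQn hQl)
  have hXm : ¬ X.1 ≤ m.1 := fun h => hXS' (pts_on_lines_eq hnm hXn h hS'n hS'm)
  have hXR' : X ≠ R' := fun h => hXm (h ▸ hR'm)
  have hXT' : X ≠ T' := fun h => hXm (h ▸ hT'm)
  refine ⟨X, ?_, ?_⟩
  · rintro (⟨h1, -⟩ | h2)
    · exact hXl h1
    · simp only [Set.mem_insert_iff, Set.mem_singleton_iff] at h2
      rcases h2 with h | h | h
      exacts [hXR' h, hXS' h, hXT' h]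
  · set nT := lineT X T' hXT' with hnT
    have hnTl : nT ≠ l := fun h => hT'l (h ▸ (le_sup_right : T'.1 ≤ nT.1))
    apply pairCount_le_one ({T', meetPt nT l hnTl} : Set (PGPoint F 2))
    have main : ∀ A B : PGPoint F 2,
        A = S' ∨ A = T' → B.1 ≤ l.1 → B ≠ Q → A ≠ B → X.1 ≤ A.1 ⊔ B.1 →
        ({A, B} : Set (PGPoint F 2)) = {T', meetPt nT l hnTl} := by
      intro A B hA hBl hBQ hAB hXle
      rcases hA with hA | hA
      · -- A = S' : contradiction
        exfalso
        have hBn : B.1 ≤ X.1 ⊔ S'.1 := mixed_pair hS'l hBl hXS' (hA ▸ hXle)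
        have e1 : n.1 = X.1 ⊔ S'.1 := line_unique hXS' hXn hS'n
        rw [← e1] at hBn
        exact hBQ (pts_on_lines_eq hnl hBn hBl hQn hQl)
      · -- A = T'
        have hBn : B.1 ≤ X.1 ⊔ T'.1 := mixed_pair hT'l hBl hXT' (hA ▸ hXle)
        have hBmeet : B = meetPt nT l hnTl := eq_meetPt hnTl hBn hBl
        rw [hA, hBmeet]
    intro A hA B hB hAB hXle
    obtain ⟨hA1, hA2⟩ := hA
    obtain ⟨hB1, hB2⟩ := hB
    simp only [Set.mem_singleton_iff] at hA2 hB2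
    have optA : (A.1 ≤ l.1 ∧ A ≠ P ∧ A ≠ Q) ∨ A = S' ∨ A = T' := by
      rcases hA1 with ⟨h1, h2⟩ | h1
      · simp only [Set.mem_insert_iff, Set.mem_singleton_iff] at h2
        push_neg at h2
        exact Or.inl ⟨h1, h2.1, h2.2⟩
      · simp only [Set.mem_insert_iff, Set.mem_singleton_iff] at h1
        rcases h1 with h | h | h
        exacts [absurd h hA2, Or.inr (Or.inl h), Or.inr (Or.inr h)]
    have optB : (B.1 ≤ l.1 ∧ B ≠ P ∧ B ≠ Q) ∨ B = S' ∨ B = T' := by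
      rcases hB1 with ⟨h1, h2⟩ | h1
      · simp only [Set.mem_insert_iff, Set.mem_singleton_iff] at h2
        push_neg at h2
        exact Or.inl ⟨h1, h2.1, h2.2⟩
      · simp only [Set.mem_insert_iff, Set.mem_singleton_iff] at h1
        rcases h1 with h | h | h
        exacts [absurd h hB2, Or.inr (Or.inl h), Or.inr (Or.inr h)]
    rcases optA with ⟨hAl, -, hAQ⟩ | hA'
    · rcases optB with ⟨hBl, -, -⟩ | hB'
      · exact absurd (line_unique hAB hAl hBl ▸ hXle) hXl
      · rw [Set.pair_comm]
        have hBm : B.1 ≤ m.1 := by rcases hB' with rfl | rfl; exacts [hS'm, hT'm]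
        exact main B A hB' hAl hAQ hAB.symm (by rwa [sup_comm])
    · rcases optB with ⟨hBl, -, hBQ⟩ | hB'
      · exact main A B hA' hBl hBQ hAB hXle
      · exfalso
        have hAm : A.1 ≤ m.1 := by rcases hA' with rfl | rfl; exacts [hS'm, hT'm]
        have hBm : B.1 ≤ m.1 := by rcases hB' with rfl | rfl; exacts [hS'm, hT'm]
        exact hXm (line_unique hAB hAm hBm ▸ hXle)

/-- Removing a point of `l \ {P,Q}` destroys saturation. -/
lemma remove_lpt
    (l m : PGLine F 2) (P Q R S T E : PGPoint F 2)
    (hPQ : P ≠ Q) (hPl : P.1 ≤ l.1) (hQl : Q.1 ≤ l.1)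
    (hml : m ≠ l) (hPm : P.1 ≤ m.1)
    (hRm : R.1 ≤ m.1) (hSm : S.1 ≤ m.1) (hTm : T.1 ≤ m.1)
    (hRP : R ≠ P) (hSP : S ≠ P) (hTP : T ≠ P)
    (hRS : R ≠ S)
    (hEl : E.1 ≤ l.1) (hEP : E ≠ P) (hEQ : E ≠ Q) :
    ∃ X : PGPoint F 2,
      X ∉ (({Z : PGPoint F 2 | Z.1 ≤ l.1} \ {P, Q}) ∪ {R, S, T}) ∧
      pairCount ((({Z : PGPoint F 2 | Z.1 ≤ l.1} \ {P, Q}) ∪ {R, S, T}) \ {E}) X ≤ 1 := by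
  have hRl : ¬ R.1 ≤ l.1 := fun h => hRP (pts_on_lines_eq hml hRm h hPm hPl)
  have hSl : ¬ S.1 ≤ l.1 := fun h => hSP (pts_on_lines_eq hml hSm h hPm hPl)
  have hTl : ¬ T.1 ≤ l.1 := fun h => hTP (pts_on_lines_eq hml hTm h hPm hPl)
  have hQm : ¬ Q.1 ≤ m.1 := fun h => hPQ (pts_on_lines_eq hml hPm hPl h hQl)
  have hEm : ¬ E.1 ≤ m.1 := fun h => hEP (pts_on_lines_eq hml h hEl hPm hPl)
  have hQR : Q ≠ R := fun h => hRl (h ▸ hQl)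
  have hSE : S ≠ E := fun h => hSl (h ▸ hEl)
  set n1 := lineT Q R hQR with hn1
  set n2 := lineT S E hSE with hn2
  have hQn1 : Q.1 ≤ n1.1 := le_sup_left
  have hRn1 : R.1 ≤ n1.1 := le_sup_right
  have hSn2 : S.1 ≤ n2.1 := le_sup_left
  have hEn2 : E.1 ≤ n2.1 := le_sup_right
  have hn1l : n1 ≠ l := fun h => hRl (h ▸ hRn1)
  have hn2l : n2 ≠ l := fun h => hSl (h ▸ hSn2)
  have hn1m : n1 ≠ m := fun h => hQm (h ▸ hQn1)
  have hn2m : n2 ≠ m := fun h => hEm (h ▸ hEn2)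
  have hn12 : n1 ≠ n2 := by
    intro h
    have hQn2 : Q.1 ≤ n2.1 := h ▸ hQn1
    exact hEQ (pts_on_lines_eq hn2l hEn2 hEl hQn2 hQl)
  set X := meetPt n1 n2 hn12 with hX
  have hXn1 : X.1 ≤ n1.1 := inf_le_left
  have hXn2 : X.1 ≤ n2.1 := inf_le_right
  have hXl : ¬ X.1 ≤ l.1 := by
    intro h
    have hXQ : X = Q := pts_on_lines_eq hn1l hXn1 h hQn1 hQl
    have : Q.1 ≤ n2.1 := hXQ ▸ hXn2
    exact hEQ (pts_on_lines_eq hn2l hEn2 hEl this hQl)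
  have hXm : ¬ X.1 ≤ m.1 := by
    intro h
    have hXR : X = R := pts_on_lines_eq hn1m hXn1 h hRn1 hRm
    have hRn2 : R.1 ≤ n2.1 := hXR ▸ hXn2
    exact hRS (pts_on_lines_eq hn2m hRn2 hRm hSn2 hSm)
  have hXR : X ≠ R := fun h => hXm (h ▸ hRm)
  have hXS : X ≠ S := fun h => hXm (h ▸ hSm)
  have hXT : X ≠ T := fun h => hXm (h ▸ hTm)
  refine ⟨X, ?_, ?_⟩
  · rintro (⟨h1, -⟩ | h2)
    · exact hXl h1
    · simp only [Set.mem_insert_iff, Set.mem_singleton_iff] at h2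
      rcases h2 with h | h | h
      exacts [hXR h, hXS h, hXT h]
  · set nT := lineT X T hXT with hnT
    have hnTl : nT ≠ l := fun h => hTl (h ▸ (le_sup_right : T.1 ≤ nT.1))
    apply pairCount_le_one ({T, meetPt nT l hnTl} : Set (PGPoint F 2))
    have main : ∀ A B : PGPoint F 2,
        A = R ∨ A = S ∨ A = T → B.1 ≤ l.1 → B ≠ Q → B ≠ E → A ≠ B → X.1 ≤ A.1 ⊔ B.1 →
        ({A, B} : Set (PGPoint F 2)) = {T, meetPt nT l hnTl} := by
      intro A B hA hBl hBQ hBE hAB hXle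
      rcases hA with hA | hA | hA
      · exfalso
        have hBn : B.1 ≤ X.1 ⊔ R.1 := mixed_pair hRl hBl hXR (hA ▸ hXle)
        have e1 : n1.1 = X.1 ⊔ R.1 := line_unique hXR hXn1 hRn1
        rw [← e1] at hBn
        exact hBQ (pts_on_lines_eq hn1l hBn hBl hQn1 hQl)
      · exfalso
        have hBn : B.1 ≤ X.1 ⊔ S.1 := mixed_pair hSl hBl hXS (hA ▸ hXle)
        have e1 : n2.1 = X.1 ⊔ S.1 := line_unique hXS hXn2 hSn2
        rw [← e1] at hBn
        exact hBE (pts_on_lines_eq hn2l hBn hBl hEn2 hEl)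
      · have hBn : B.1 ≤ X.1 ⊔ T.1 := mixed_pair hTl hBl hXT (hA ▸ hXle)
        have hBmeet : B = meetPt nT l hnTl := eq_meetPt hnTl hBn hBl
        rw [hA, hBmeet]
    intro A hA B hB hAB hXle
    obtain ⟨hA1, hA2⟩ := hA
    obtain ⟨hB1, hB2⟩ := hB
    simp only [Set.mem_singleton_iff] at hA2 hB2
    have optA : (A.1 ≤ l.1 ∧ A ≠ P ∧ A ≠ Q) ∨ A = R ∨ A = S ∨ A = T := by
      rcases hA1 with ⟨h1, h2⟩ | h1
      · simp only [Set.mem_insert_iff, Set.mem_singleton_iff] at h2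
        push_neg at h2
        exact Or.inl ⟨h1, h2.1, h2.2⟩
      · simp only [Set.mem_insert_iff, Set.mem_singleton_iff] at h1
        exact Or.inr h1
    have optB : (B.1 ≤ l.1 ∧ B ≠ P ∧ B ≠ Q) ∨ B = R ∨ B = S ∨ B = T := by
      rcases hB1 with ⟨h1, h2⟩ | h1
      · simp only [Set.mem_insert_iff, Set.mem_singleton_iff] at h2
        push_neg at h2
        exact Or.inl ⟨h1, h2.1, h2.2⟩
      · simp only [Set.mem_insert_iff, Set.mem_singleton_iff] at h1
        exact Or.inr h1
    rcases optA with ⟨hAl, -, hAQ⟩ | hA'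
    · rcases optB with ⟨hBl, -, -⟩ | hB'
      · exact absurd (line_unique hAB hAl hBl ▸ hXle) hXl
      · rw [Set.pair_comm]
        exact main B A hB' hAl hAQ hA2 hAB.symm (by rwa [sup_comm])
    · rcases optB with ⟨hBl, -, hBQ⟩ | hB'
      · exact main A B hA' hBl hBQ hB2 hAB hXle
      · exfalso
        have hAm : A.1 ≤ m.1 := by rcases hA' with rfl | rfl | rfl; exacts [hRm, hSm, hTm]
        have hBm : B.1 ≤ m.1 := by rcases hB' with rfl | rfl | rfl; exacts [hRm, hSm, hTm]
        exact hXm (line_unique hAB hAm hBm ▸ hXle)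

end Fin

end PGAux

/-- Let `q ≥ 4`, `ℓ` a line of `PG(2,q)`, `P ≠ Q` points of
`ℓ`, `m ≠ ℓ` a line through `P`, and `R, S, T` pairwise distinct points of
`m \ {P}`. Then `A = (ℓ \ {P,Q}) ∪ {R,S,T}` is a minimal `(1,2)`-saturating set
of size `q+2`. -/
theorem stmt_16 (F : Type) [Field F] [Fintype F] (q : ℕ)
    (hq : Fintype.card F = q) (hq4 : 4 ≤ q)
    (l m : PGLine F 2) (P Q R S T : PGPoint F 2)
    (hPQ : P ≠ Q) (hPl : P.1 ≤ l.1) (hQl : Q.1 ≤ l.1)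
    (hml : m ≠ l) (hPm : P.1 ≤ m.1)
    (hRm : R.1 ≤ m.1) (hSm : S.1 ≤ m.1) (hTm : T.1 ≤ m.1)
    (hRP : R ≠ P) (hSP : S ≠ P) (hTP : T ≠ P)
    (hRS : R ≠ S) (hRT : R ≠ T) (hST : S ≠ T) :
    (({X : PGPoint F 2 | X.1 ≤ l.1} \ {P, Q}) ∪ {R, S, T}).ncard = q + 2 ∧
    IsMinimalSaturating (({X : PGPoint F 2 | X.1 ≤ l.1} \ {P, Q}) ∪ {R, S, T}) 2 := by
  classical
  subst hq
  have hq2 : 2 ≤ Fintype.card F := by omega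
  set Sl := {X : PGPoint F 2 | X.1 ≤ l.1} with hSldef
  set A := (Sl \ {P, Q}) ∪ {R, S, T} with hAdef
  have hRnl : ¬ R.1 ≤ l.1 := fun h => hRP (PGAux.pts_on_lines_eq hml hRm h hPm hPl)
  have hSnl : ¬ S.1 ≤ l.1 := fun h => hSP (PGAux.pts_on_lines_eq hml hSm h hPm hPl)
  have hTnl : ¬ T.1 ≤ l.1 := fun h => hTP (PGAux.pts_on_lines_eq hml hTm h hPm hPl)
  -- three auxiliary points on l
  obtain ⟨E1, hE1l, hE1x⟩ := PGAux.exists_pt_notin l.2 hq2 {P, Q}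
    (lt_of_le_of_lt (PGAux.ncard_le2 P Q) (by omega))
  obtain ⟨E2, hE2l, hE2x⟩ := PGAux.exists_pt_notin l.2 hq2 {P, Q, E1}
    (lt_of_le_of_lt (PGAux.ncard_le3 P Q E1) (by omega))
  obtain ⟨E3, hE3l, hE3x⟩ := PGAux.exists_pt_notin l.2 hq2 {P, Q, E1, E2}
    (lt_of_le_of_lt (PGAux.ncard_le4 P Q E1 E2) (by omega))
  simp only [Set.mem_insert_iff, Set.mem_singleton_iff] at hE1x hE2x hE3x
  push_neg at hE1x hE2x hE3x
  obtain ⟨hE1P, hE1Q⟩ := hE1x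
  obtain ⟨hE2P, hE2Q, hE21⟩ := hE2x
  obtain ⟨hE3P, hE3Q, hE31, hE32⟩ := hE3x
  have memA : ∀ Y : PGPoint F 2, Y.1 ≤ l.1 → Y ≠ P → Y ≠ Q → Y ∈ A :=
    fun Y h1 h2 h3 => Or.inl ⟨h1, by simp [h2, h3]⟩
  have memR : R ∈ A := Or.inr (by simp)
  have memS : S ∈ A := Or.inr (by simp)
  have memT : T ∈ A := Or.inr (by simp)
  have pairRS : m.1 = R.1 ⊔ S.1 := PGAux.line_unique hRS hRm hSm
  have pairRT : m.1 = R.1 ⊔ T.1 := PGAux.line_unique hRT hRm hTm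
  have pairsne : ({R, S} : Set (PGPoint F 2)) ≠ {R, T} := by
    intro h
    have : T ∈ ({R, S} : Set (PGPoint F 2)) := by rw [h]; simp
    simp only [Set.mem_insert_iff, Set.mem_singleton_iff] at this
    rcases this with h' | h'
    exacts [hRT h'.symm, hST h'.symm]
  constructor
  · -- cardinality
    have hSlcard : Sl.ncard = Fintype.card F + 1 := by
      rw [← Nat.card_coe_set_eq]
      exact PGAux.card_points_on_line l.1 l.2 hq2
    have hPQsub : ({P, Q} : Set (PGPoint F 2)) ⊆ Sl := by
      intro x hx
      simp only [Set.mem_insert_iff, Set.mem_singleton_iff] at hx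
      rcases hx with rfl | rfl
      exacts [hPl, hQl]
    have hdiff : (Sl \ {P, Q}).ncard = Fintype.card F + 1 - 2 := by
      rw [Set.ncard_diff hPQsub (Set.toFinite _), hSlcard, Set.ncard_pair hPQ]
    have hdisj : Disjoint (Sl \ {P, Q}) ({R, S, T} : Set (PGPoint F 2)) := by
      rw [Set.disjoint_right]
      intro x hx hx2
      simp only [Set.mem_insert_iff, Set.mem_singleton_iff] at hx
      have hxl : x.1 ≤ l.1 := hx2.1
      rcases hx with rfl | rfl | rfl
      exacts [hRnl hxl, hSnl hxl, hTnl hxl]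
    have hRnotST : R ∉ ({S, T} : Set (PGPoint F 2)) := by
      simp only [Set.mem_insert_iff, Set.mem_singleton_iff]
      push_neg
      exact ⟨hRS, hRT⟩
    have hRSTcard : ({R, S, T} : Set (PGPoint F 2)).ncard = 3 := by
      rw [Set.ncard_insert_of_notMem hRnotST (Set.toFinite _), Set.ncard_pair hST]
    have := Set.ncard_union_eq hdisj (Set.toFinite _) (Set.toFinite _)
    rw [hdiff, hRSTcard] at this
    rw [hAdef]
    omega
  constructor
  · -- saturating
    refine ⟨?_, ?_, ?_⟩
    · -- spans
      have h1 : l.1 ≤ ⨆ P ∈ A, P.1 := by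
        rw [PGAux.line_unique (fun h => hE21 h.symm) hE1l hE2l]
        exact sup_le (le_biSup _ (memA E1 hE1l hE1P hE1Q))
          (le_biSup _ (memA E2 hE2l hE2P hE2Q))
      have h2 : R.1 ≤ ⨆ P ∈ A, P.1 := le_biSup _ memR
      have hlt : l.1 < l.1 ⊔ R.1 :=
        lt_of_le_of_ne le_sup_left (fun h => hRnl (h ▸ le_sup_right))
      have h3 : finrank F ↥(l.1 ⊔ R.1) ≤ 3 := by
        have := Submodule.finrank_le (l.1 ⊔ R.1)
        rwa [Module.finrank_fin_fun] at this
      have h4 : 2 < finrank F ↥(l.1 ⊔ R.1) := by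
        have := Submodule.finrank_lt_finrank_of_lt hlt
        omega
      have htop : l.1 ⊔ R.1 = ⊤ := Submodule.eq_top_of_finrank_eq
        (by rw [Module.finrank_fin_fun]; omega)
      rw [Spans, eq_top_iff, ← htop]
      exact sup_le h1 h2
    · -- not univ
      intro h
      have hPA : P ∈ A := h.symm ▸ Set.mem_univ P
      rcases hPA with ⟨-, h2⟩ | h2
      · simp at h2
      · simp only [Set.mem_insert_iff, Set.mem_singleton_iff] at h2
        rcases h2 with h' | h' | h'
        exacts [hRP h'.symm, hSP h'.symm, hTP h'.symm]
    · -- saturation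
      intro X hXA
      by_cases hXl' : X.1 ≤ l.1
      · have hXPQ : X = P ∨ X = Q := by
          by_contra h
          push_neg at h
          exact hXA (memA X hXl' h.1 h.2)
        rcases hXPQ with rfl | rfl
        · exact PGAux.two_le_pairCount memR memS memR memT hRS hRT
            (pairRS ▸ hPm) (pairRT ▸ hPm) pairsne
        · have pl12 : l.1 = E1.1 ⊔ E2.1 :=
            PGAux.line_unique (fun h => hE21 h.symm) hE1l hE2l
          have pl13 : l.1 = E1.1 ⊔ E3.1 :=
            PGAux.line_unique (fun h => hE31 h.symm) hE1l hE3l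
          have hne' : ({E1, E2} : Set (PGPoint F 2)) ≠ {E1, E3} := by
            intro h
            have : E3 ∈ ({E1, E2} : Set (PGPoint F 2)) := by rw [h]; simp
            simp only [Set.mem_insert_iff, Set.mem_singleton_iff] at this
            rcases this with h' | h'
            exacts [hE31 h', hE32 h']
          exact PGAux.two_le_pairCount (memA E1 hE1l hE1P hE1Q)
            (memA E2 hE2l hE2P hE2Q) (memA E1 hE1l hE1P hE1Q)
            (memA E3 hE3l hE3P hE3Q) (fun h => hE21 h.symm) (fun h => hE31 h.symm)
            (pl12 ▸ hXl') (pl13 ▸ hXl') hne'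
      · by_cases hXm' : X.1 ≤ m.1
        · exact PGAux.two_le_pairCount memR memS memR memT hRS hRT
            (pairRS ▸ hXm') (pairRT ▸ hXm') pairsne
        · have key : ∀ U1 U2 : PGPoint F 2, U1 ∈ A → U2 ∈ A →
              U1.1 ≤ m.1 → U2.1 ≤ m.1 → U1 ≠ P → U2 ≠ P → U1 ≠ U2 →
              ¬ Q.1 ≤ X.1 ⊔ U1.1 → ¬ Q.1 ≤ X.1 ⊔ U2.1 → 2 ≤ pairCount A X := by
            intro U1 U2 m1 m2 hU1m' hU2m' hU1P hU2P h12 hn1 hn2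
            obtain ⟨Y1, hY1l, hY1P, hXle1, hY1n⟩ :=
              PGAux.exists_Y hml hPl hPm hU1m' hU1P hXl' hXm'
            obtain ⟨Y2, hY2l, hY2P, hXle2, hY2n⟩ :=
              PGAux.exists_Y hml hPl hPm hU2m' hU2P hXl' hXm'
            have hY1Q : Y1 ≠ Q := fun h => hn1 (by rw [← h]; exact hY1n)
            have hY2Q : Y2 ≠ Q := fun h => hn2 (by rw [← h]; exact hY2n)
            have hU1l : ¬ U1.1 ≤ l.1 :=
              fun h => hU1P (PGAux.pts_on_lines_eq hml hU1m' h hPm hPl)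
            have hU2l : ¬ U2.1 ≤ l.1 :=
              fun h => hU2P (PGAux.pts_on_lines_eq hml hU2m' h hPm hPl)
            have hU1Y1 : U1 ≠ Y1 := fun h => hU1l (h ▸ hY1l)
            have hU2Y2 : U2 ≠ Y2 := fun h => hU2l (h ▸ hY2l)
            have hne : ({U1, Y1} : Set (PGPoint F 2)) ≠ {U2, Y2} := by
              intro h
              have hmem : U1 ∈ ({U2, Y2} : Set (PGPoint F 2)) := by rw [← h]; simp
              simp only [Set.mem_insert_iff, Set.mem_singleton_iff] at hmem
              rcases hmem with h' | h'
              exacts [h12 h', hU1l (h' ▸ hY2l)]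
            exact PGAux.two_le_pairCount m1 (memA Y1 hY1l hY1P hY1Q)
              m2 (memA Y2 hY2l hY2P hY2Q) hU1Y1 hU2Y2 hXle1 hXle2 hne
          by_cases hqr : Q.1 ≤ X.1 ⊔ R.1
          · have hqs : ¬ Q.1 ≤ X.1 ⊔ S.1 := fun h =>
              PGAux.not_both hml hPl hPm hPQ hQl hRm hSm hRS hXl' hXm' hqr h
            have hqt : ¬ Q.1 ≤ X.1 ⊔ T.1 := fun h =>
              PGAux.not_both hml hPl hPm hPQ hQl hRm hTm hRT hXl' hXm' hqr h
            exact key S T memS memT hSm hTm hSP hTP hST hqs hqt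
          · by_cases hqs : Q.1 ≤ X.1 ⊔ S.1
            · have hqt : ¬ Q.1 ≤ X.1 ⊔ T.1 := fun h =>
                PGAux.not_both hml hPl hPm hPQ hQl hSm hTm hST hXl' hXm' hqs h
              exact key R T memR memT hRm hTm hRP hTP hRT hqr hqt
            · exact key R S memR memS hRm hSm hRP hSP hRS hqr hqs
  · -- minimality
    intro T' hT' hsat
    obtain ⟨a, haA, haT⟩ := Set.exists_of_ssubset hT'
    have hTsub : T' ⊆ A \ {a} :=
      fun x hx => ⟨hT'.subset hx, fun h => haT (Set.mem_singleton_iff.1 h ▸ hx)⟩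
    have witness : ∃ X : PGPoint F 2, X ∉ A ∧ pairCount (A \ {a}) X ≤ 1 := by
      rcases haA with ⟨hal, haPQ⟩ | haRST
      · simp only [Set.mem_insert_iff, Set.mem_singleton_iff] at haPQ
        push_neg at haPQ
        exact PGAux.remove_lpt l m P Q R S T a hPQ hPl hQl hml hPm hRm hSm hTm
          hRP hSP hTP hRS hal haPQ.1 haPQ.2
      · simp only [Set.mem_insert_iff, Set.mem_singleton_iff] at haRST
        rcases haRST with rfl | rfl | rfl
        · exact PGAux.remove_mpt hq4 l m P Q a S T hPQ hPl hQl hml hPm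
            hRm hSm hTm hRP hSP hTP hST
        · have hperm : ({R, a, T} : Set (PGPoint F 2)) = {a, R, T} := by
            ext x; simp only [Set.mem_insert_iff, Set.mem_singleton_iff]; tauto
          rw [hAdef, hperm]
          exact PGAux.remove_mpt hq4 l m P Q a R T hPQ hPl hQl hml hPm
            hSm hRm hTm hSP hRP hTP hRT
        · have hperm : ({R, S, a} : Set (PGPoint F 2)) = {a, R, S} := by
            ext x; simp only [Set.mem_insert_iff, Set.mem_singleton_iff]; tauto
          rw [hAdef, hperm]
          exact PGAux.remove_mpt hq4 l m P Q a R S hPQ hPl hQl hml hPm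
            hTm hRm hSm hTP hRP hSP hRS
    obtain ⟨X, hXnA, hXcount⟩ := witness
    obtain ⟨-, -, hsat3⟩ := hsat
    have hXT' : X ∉ T' := fun h => hXnA (hT'.subset h)
    have h2 := hsat3 X hXT'
    have h3 : pairCount T' X ≤ pairCount (A \ {a}) X := PGAux.pairCount_mono hTsub X
    omega
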